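/- Let (X, X̃) be a Cauchy pair on V with eigenvalues {x_i} of X and {x̃_i} of X̃, and let α_i = tr(E_i(X - X̃)) where E_i is the primitive idempotent of X for x_i. Then α_i = (∏_k (x_i - x̃_k)) / (∏_{k ≠ i} (x_i - x_k)) for all i. -/

import Mathlib

def IsCauchyPair (K V : Type*) [Field K] [AddCommGroup V] [Module K V]
    (X Xt : Module.End K V) : Prop :=
  (⨆ μ : K, X.eigenspace μ) = ⊤ ∧
  (⨆ μ : K, Xt.eigenspace μ) = ⊤ ∧
  Module.rank K (LinearMap.range (X - Xt)) = 1 ∧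
  ∀ W : Submodule K V, W.map (X : V →ₗ[K] V) ≤ W → W.map (Xt : V →ₗ[K] V) ≤ W →
    W = ⊥ ∨ W = ⊤

/-- Linearity of the determinant in one row, summed form. -/
lemma det_updateRow_sum_smul {m : Type*} [DecidableEq m] [Fintype m] {K : Type*} [CommRing K]
    (A : Matrix m m K) (i : m) (s : Finset m) (c : m → K) (r : m → m → K) :
    (A.updateRow i (∑ k ∈ s, c k • r k)).det = ∑ k ∈ s, c k * (A.updateRow i (r k)).det := by
  classical
  induction s using Finset.induction with
  | empty =>
      simp only [Finset.sum_empty]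
      exact Matrix.det_eq_zero_of_row_eq_zero i (fun j => by simp)
  | insert _ _ h ih =>
      rw [Finset.sum_insert h, Matrix.det_updateRow_add, Matrix.det_updateRow_smul, ih,
        Finset.sum_insert h]

lemma updateRow_diagonal_single {m : Type*} [DecidableEq m] [Fintype m] {K : Type*} [CommRing K]
    (d : m → K) (i : m) :
    (Matrix.diagonal d).updateRow i (Pi.single i (1 : K)) =
      Matrix.diagonal (Function.update d i 1) := by
  ext j k
  by_cases hj : j = i
  · subst hj
    rw [Matrix.updateRow_self]
    by_cases hk : k = j
    · subst hk; simp
    · simp [Matrix.diagonal_apply, Pi.single_apply, hk, Ne.symm hk]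
  · rw [Matrix.updateRow_ne hj]
    by_cases hk : j = k
    · subst hk; simp [Matrix.diagonal_apply, Function.update_of_ne hj]
    · simp [Matrix.diagonal_apply, hk]

theorem stmt14 {K V : Type*} [Field K] [AddCommGroup V] [Module K V] [FiniteDimensional K V]
    {n : ℕ} {X Xt : Module.End K V} (h : IsCauchyPair K V X Xt)
    (x : Fin n → K) (hxinj : Function.Injective x)
    (hxeig : ∀ i, X.HasEigenvalue (x i))
    (hxall : ∀ μ : K, X.HasEigenvalue μ → ∃ i, x i = μ)
    (xt : Fin n → K) (hxtinj : Function.Injective xt)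
    (hxteig : ∀ i, Xt.HasEigenvalue (xt i))
    (hxtall : ∀ μ : K, Xt.HasEigenvalue μ → ∃ i, xt i = μ)
    (E : Fin n → Module.End K V)
    (hE1 : ∀ i, ∀ u ∈ X.eigenspace (x i), E i u = u)
    (hE0 : ∀ i j, i ≠ j → ∀ u ∈ X.eigenspace (x j), E i u = 0)
    (i : Fin n) :
    LinearMap.trace K V (E i * (X - Xt)) =
      (∏ k, (x i - xt k)) / (∏ k ∈ Finset.univ \ {i}, (x i - x k)) := by
  classical
  have : Nonempty (Fin n) := ⟨i⟩
  obtain ⟨hX, hXt, hrank, hirr⟩ := h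
  set R : Module.End K V := X - Xt with hRdef
  -- extract the rank-one structure: R u = φ u • v
  obtain ⟨v₀, hv₀, hv₀all⟩ := rank_eq_one_iff.mp hrank
  set v : V := (v₀ : V) with hvdef
  have hvne : v ≠ 0 := fun h0 => hv₀ (Subtype.ext h0)
  have hRv : ∀ u : V, ∃ c : K, R u = c • v := by
    intro u
    obtain ⟨c, hc⟩ := hv₀all ⟨R u, LinearMap.mem_range_self R u⟩
    exact ⟨c, by simpa using (congrArg Subtype.val hc).symm⟩
  obtain ⟨g, hg⟩ := (LinearMap.toSpanSingleton K V v).exists_leftInverse_of_injective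
    (LinearMap.ker_toSpanSingleton K hvne)
  have hgv : g v = 1 := by
    have := congrArg (fun f => f (1 : K)) hg
    simpa [LinearMap.toSpanSingleton_apply] using this
  set φ : V →ₗ[K] K := g ∘ₗ (R : V →ₗ[K] V) with hφdef
  have hφ : ∀ u, R u = φ u • v := by
    intro u
    obtain ⟨c, hc⟩ := hRv u
    have hφu : φ u = c := by
      simp only [hφdef, LinearMap.comp_apply]
      rw [show (R : V →ₗ[K] V) u = R u from rfl, hc, map_smul, hgv, smul_eq_mul, mul_one]
    rw [hφu, hc]
  -- the supremum of the eigenspaces over `Fin n`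
  have hsupx : (⨆ j, X.eigenspace (x j)) = ⊤ := by
    rw [← top_le_iff, ← hX]
    refine iSup_le fun μ => ?_
    by_cases hμ : X.eigenspace μ = ⊥
    · simp [hμ]
    · obtain ⟨j, hj⟩ := hxall μ (Module.End.hasEigenvalue_iff.mpr hμ)
      exact hj ▸ le_iSup (fun j => X.eigenspace (x j)) j
  -- decompose v into eigencomponents
  have hv_mem : v ∈ ⨆ j, X.eigenspace (x j) := hsupx ▸ Submodule.mem_top
  obtain ⟨c, hc_mem, hc_sum⟩ := (Submodule.mem_iSup_iff_exists_finsupp _ _).mp hv_mem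
  set b : Fin n → V := fun j => c j with hbdef
  have hb_mem : ∀ j, b j ∈ X.eigenspace (x j) := hc_mem
  have hc_sum' : ∑ j, b j = v := by
    rw [← hc_sum]
    exact (Finsupp.sum_fintype c (fun _ xi => xi) (fun _ => rfl)).symm
  have hEv : ∀ j, E j v = b j := by
    intro j
    have h1 : E j v = ∑ k, E j (b k) := by rw [← map_sum, hc_sum']
    rw [h1, Finset.sum_eq_single j
      (fun k _ hk => hE0 j k (Ne.symm hk) _ (hb_mem k))
      (fun hj => absurd (Finset.mem_univ j) hj)]
    exact hE1 j _ (hb_mem j)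
  -- each eigenspace of X is spanned by the corresponding component of v
  have hspan : ∀ j, X.eigenspace (x j) = Submodule.span K {b j} := by
    intro j
    set U : Fin n → Submodule K V :=
      fun k => if k = j then Submodule.span K {b j} else X.eigenspace (x k) with hU
    have hU_le : ∀ k, U k ≤ X.eigenspace (x k) := by
      intro k
      by_cases hk : k = j
      · subst hk
        rw [hU]; simp only [if_pos rfl]
        exact Submodule.span_le.mpr (Set.singleton_subset_iff.mpr (hb_mem k))
      · rw [hU]; simp only [if_neg hk]; exact le_rfl
    set W := ⨆ k, U k with hW
    have hbU : ∀ k, b k ∈ U k := by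
      intro k
      by_cases hk : k = j
      · subst hk; rw [hU]; simp only [if_pos rfl]
        exact Submodule.mem_span_singleton_self _
      · rw [hU]; simp only [if_neg hk]; exact hb_mem k
    have hvW : v ∈ W := by
      rw [← hc_sum']
      exact Submodule.sum_mem _ fun k _ => Submodule.mem_iSup_of_mem k (hbU k)
    have hWX : Submodule.map (X : V →ₗ[K] V) W ≤ W := by
      rw [hW, Submodule.map_iSup]
      refine iSup_le fun k => le_trans ?_ (le_iSup U k)
      rintro _ ⟨u, hu, rfl⟩
      have hu' : X u = x k • u := Module.End.mem_eigenspace_iff.mp (hU_le k hu)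
      rw [show (X : V →ₗ[K] V) u = X u from rfl, hu']
      exact Submodule.smul_mem _ _ hu
    have hWXt : Submodule.map (Xt : V →ₗ[K] V) W ≤ W := by
      rw [hW, Submodule.map_iSup]
      refine iSup_le fun k => ?_
      rintro _ ⟨u, hu, rfl⟩
      have hu' : X u = x k • u := Module.End.mem_eigenspace_iff.mp (hU_le k hu)
      have hXtu : Xt u = x k • u - φ u • v := by
        have h1 : X u - Xt u = φ u • v := by
          have := hφ u
          rwa [hRdef, LinearMap.sub_apply] at this
        rw [← hu', eq_sub_iff_add_eq, ← h1]; abel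
      rw [show (Xt : V →ₗ[K] V) u = Xt u from rfl, hXtu]
      exact Submodule.sub_mem _
        (Submodule.smul_mem _ _ (Submodule.mem_iSup_of_mem k hu))
        (Submodule.smul_mem _ _ hvW)
    have hWtop : W = ⊤ := by
      rcases hirr W hWX hWXt with h0 | h1
      · rw [h0] at hvW
        exact absurd ((Submodule.mem_bot K).mp hvW) hvne
      · exact h1
    set S : Submodule K V := ⨆ k, ⨆ _ : k ≠ j, X.eigenspace (x k) with hS
    have hWdecomp : W = Submodule.span K {b j} ⊔ S := by
      apply le_antisymm
      · refine iSup_le fun k => ?_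
        by_cases hk : k = j
        · subst hk; rw [hU]; simp only [if_pos rfl]; exact le_sup_left
        · refine le_trans ?_ le_sup_right
          rw [hU]; simp only [if_neg hk]
          exact le_iSup_of_le k (le_iSup_of_le hk le_rfl)
      · refine sup_le ?_ ?_
        · refine le_trans ?_ (le_iSup U j)
          rw [hU]; simp only [if_pos rfl]; exact le_rfl
        · refine iSup_le fun k => iSup_le fun hk => le_trans ?_ (le_iSup U k)
          rw [hU]; simp only [if_neg hk]; exact le_rfl
    have hdisj : Disjoint (X.eigenspace (x j)) S :=
      (X.eigenspaces_iSupIndep.comp hxinj) j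
    apply le_antisymm
    · have h1 : X.eigenspace (x j) = (Submodule.span K {b j} ⊔ S) ⊓ X.eigenspace (x j) := by
        rw [← hWdecomp, hWtop, top_inf_eq]
      have h2 : (Submodule.span K {b j} ⊔ S) ⊓ X.eigenspace (x j) =
          Submodule.span K {b j} ⊔ (S ⊓ X.eigenspace (x j)) :=
        sup_inf_assoc_of_le _ (Submodule.span_le.mpr (Set.singleton_subset_iff.mpr (hb_mem j)))
      have h3 : S ⊓ X.eigenspace (x j) = ⊥ := by
        rw [inf_comm]; exact disjoint_iff.mp hdisj
      rw [h1, h2, h3, sup_bot_eq]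
    · exact Submodule.span_le.mpr (Set.singleton_subset_iff.mpr (hb_mem j))
  have hbne : ∀ j, b j ≠ 0 := by
    intro j hbj
    have h1 : X.eigenspace (x j) ≠ ⊥ := Module.End.hasEigenvalue_iff.mp (hxeig j)
    apply h1
    rw [hspan j, hbj, Submodule.span_zero_singleton]
  -- basis of eigenvectors of X
  have hli : LinearIndependent K b :=
    X.eigenvectors_linearIndependent' x hxinj b (fun j => ⟨hb_mem j, hbne j⟩)
  have hspan_top : ⊤ ≤ Submodule.span K (Set.range b) := by
    rw [← hsupx]
    refine iSup_le fun j => ?_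
    rw [hspan j]
    exact Submodule.span_mono (Set.singleton_subset_iff.mpr (Set.mem_range_self j))
  set B : Module.Basis (Fin n) K V := Module.Basis.mk hli hspan_top with hBdef
  have hB : ∀ j, B j = b j := fun j => Module.Basis.mk_apply hli hspan_top j
  have hfr : Module.finrank K V = n := by
    rw [Module.finrank_eq_card_basis B, Fintype.card_fin]
  -- basis of eigenvectors of Xt
  have hwex : ∀ j, ∃ w, Xt.HasEigenvector (xt j) w := fun j =>
    (hxteig j).exists_hasEigenvector
  choose w hw using hwex
  have hliw : LinearIndependent K w :=
    Xt.eigenvectors_linearIndependent' xt hxtinj w hw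
  have hcard : Fintype.card (Fin n) = Module.finrank K V := by
    rw [Fintype.card_fin, hfr]
  set Bt : Module.Basis (Fin n) K V := basisOfLinearIndependentOfCardEqFinrank hliw hcard with hBtdef
  have hBt : ∀ j, Bt j = w j := fun j => by
    rw [hBtdef, coe_basisOfLinearIndependentOfCardEqFinrank]
  -- the operator G = x i • 1 - Xt and its two determinant computations
  set G : Module.End K V := x i • 1 - Xt with hGdef
  have hdet1 : LinearMap.det (G : V →ₗ[K] V) = ∏ k, (x i - xt k) := by
    rw [← LinearMap.det_toMatrix Bt]
    have hmat : LinearMap.toMatrix Bt Bt G = Matrix.diagonal (fun k => x i - xt k) := by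
      ext j k
      rw [LinearMap.toMatrix_apply]
      have hGk : G (Bt k) = (x i - xt k) • Bt k := by
        rw [hGdef, hBt k]
        have hXtw : Xt (w k) = xt k • w k := (hw k).apply_eq_smul
        simp only [LinearMap.sub_apply, LinearMap.smul_apply, Module.End.one_apply, hXtw,
          sub_smul]
      rw [hGk, map_smul, Module.Basis.repr_self]
      by_cases hjk : j = k
      · subst hjk; simp
      · simp [Finsupp.single_apply, Ne.symm hjk, Matrix.diagonal_apply_ne _ hjk]
    rw [hmat, Matrix.det_diagonal]
  set a : Fin n → K := fun k => φ (b k) with hadef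
  set d : Fin n → K := fun k => x i - x k with hddef
  have hreprv : ∀ j, B.repr v j = 1 := by
    intro j
    rw [← hc_sum', map_sum]
    have : ∀ k, B.repr (b k) = Finsupp.single k 1 := by
      intro k; rw [← hB k, Module.Basis.repr_self]
    simp only [this]
    rw [Finsupp.finset_sum_apply]
    rw [Finset.sum_eq_single j (fun k _ hk => Finsupp.single_eq_of_ne' hk)
      (fun hj => absurd (Finset.mem_univ j) hj)]
    exact Finsupp.single_eq_same
  have hmatB : LinearMap.toMatrix B B G =
      Matrix.of (fun j k => (if j = k then d k else 0) + a k) := by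
    ext j k
    rw [LinearMap.toMatrix_apply]
    have hXb : X (b k) = x k • b k := Module.End.mem_eigenspace_iff.mp (hb_mem k)
    have hGb : G (b k) = d k • b k + a k • v := by
      have hXtb : Xt (b k) = x k • b k - a k • v := by
        have h1 : X (b k) - Xt (b k) = a k • v := by
          have := hφ (b k)
          rwa [hRdef, LinearMap.sub_apply] at this
        rw [← hXb, eq_sub_iff_add_eq, ← h1]; abel
      rw [hGdef]
      simp only [LinearMap.sub_apply, LinearMap.smul_apply, Module.End.one_apply, hXtb, hddef,
        sub_smul]
      abel
    rw [← hB k] at hGb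
    rw [hGb, map_add, map_smul, map_smul, Module.Basis.repr_self]
    simp only [Finsupp.coe_add, Finsupp.coe_smul, Pi.add_apply, Pi.smul_apply, smul_eq_mul,
      Finsupp.single_apply, hreprv j, mul_one, Matrix.of_apply]
    congr 1
    by_cases hjk : j = k
    · subst hjk; simp
    · have hkj : ¬ k = j := fun hkj => hjk hkj.symm
      simp [hkj, hjk]
  have hdet2 : LinearMap.det (G : V →ₗ[K] V) = a i * ∏ k ∈ Finset.univ \ {i}, d k := by
    rw [← LinearMap.det_toMatrix B, hmatB]
    set N : Matrix (Fin n) (Fin n) K := (Matrix.diagonal d).updateRow i a with hN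
    have h1 : (Matrix.of (fun j k => (if j = k then d k else 0) + a k)).det = N.det := by
      apply Matrix.det_eq_of_forall_row_eq_smul_add_const
        (fun j => if j = i then 0 else 1) i (if_pos rfl)
      intro j k
      by_cases hj : j = i
      · subst hj
        rw [if_pos rfl, hN, Matrix.updateRow_self]
        simp only [Matrix.of_apply, zero_mul, add_zero]
        by_cases hk : j = k
        · subst hk; simp [hddef]
        · simp [hk]
      · rw [if_neg hj, hN, Matrix.updateRow_ne hj, Matrix.updateRow_self]
        simp only [Matrix.of_apply, one_mul, Matrix.diagonal_apply]
        by_cases hk : j = k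
        · subst hk; simp
        · simp [hk]
    rw [h1, hN]
    have h2 : a = ∑ k, a k • (Pi.single k (1 : K) : Fin n → K) := by
      funext j
      rw [Finset.sum_apply]
      rw [Finset.sum_eq_single j
        (fun k _ hk => by simp [Pi.single_apply, Ne.symm hk])
        (fun hj => absurd (Finset.mem_univ j) hj)]
      simp
    conv_lhs => rw [h2]
    rw [det_updateRow_sum_smul]
    rw [Finset.sum_eq_single i
      (fun k _ hk => ?_) (fun hj => absurd (Finset.mem_univ i) hj)]
    · rw [updateRow_diagonal_single, Matrix.det_diagonal,
        Finset.prod_update_of_mem (Finset.mem_univ i), one_mul]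
    · have : ((Matrix.diagonal d).updateRow i (Pi.single k (1 : K))).det = 0 := by
        apply Matrix.det_eq_zero_of_column_eq_zero i
        intro j
        by_cases hj : j = i
        · subst hj
          rw [Matrix.updateRow_self]
          exact Pi.single_eq_of_ne (Ne.symm hk) _
        · rw [Matrix.updateRow_ne hj]
          exact Matrix.diagonal_apply_ne d hj
      rw [this, mul_zero]
  -- the trace computation
  have htr : LinearMap.trace K V (E i * (X - Xt)) = a i := by
    rw [LinearMap.trace_eq_matrix_trace K B, Matrix.trace]
    have hentry : ∀ k, (LinearMap.toMatrix B B (E i * (X - Xt))).diag k =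
        if i = k then a k else 0 := by
      intro k
      rw [Matrix.diag]
      rw [LinearMap.toMatrix_apply]
      have happ : (E i * (X - Xt)) (B k) = a k • b i := by
        rw [hB k, Module.End.mul_apply, show (X - Xt) (b k) = R (b k) from rfl, hφ (b k),
          map_smul, hEv i]
      rw [happ, map_smul]
      rw [show B.repr (b i) = Finsupp.single i 1 from by rw [← hB i, Module.Basis.repr_self]]
      simp [Finsupp.single_apply]
    rw [Finset.sum_congr rfl (fun k _ => hentry k)]
    rw [Finset.sum_eq_single i (fun k _ hk => if_neg (Ne.symm hk))
      (fun hj => absurd (Finset.mem_univ i) hj), if_pos rfl]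
  -- conclusion
  have hne : (∏ k ∈ Finset.univ \ {i}, (x i - x k)) ≠ 0 := by
    refine Finset.prod_ne_zero_iff.mpr fun k hk => sub_ne_zero.mpr fun hxx => ?_
    have : i = k := hxinj hxx
    rw [this] at hk
    simp at hk
  rw [htr, eq_div_iff hne]
  calc a i * ∏ k ∈ Finset.univ \ {i}, (x i - x k)
      = a i * ∏ k ∈ Finset.univ \ {i}, d k := rfl
    _ = LinearMap.det (G : V →ₗ[K] V) := hdet2.symm
    _ = ∏ k, (x i - xt k) := hdet1
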